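/- Let k be a field, R = k[x,y] localized at (x,y), and m = (x,y)R. Then for all m ≥ 0, the colon ideal ((x²,xy)^{m+1} : (x)) equals the ideal generated by the monomials x^{2m+1-i}y^i for 0 ≤ i ≤ m+1. -/
import Mathlib


open MvPolynomial

/-- Power of the span of a pair is spanned by the monomials. -/
lemma span_pair_pow_eq {R : Type*} [CommRing R] (a b : R) (n : ℕ) :
    Ideal.span {a, b} ^ n =
      Ideal.span {z : R | ∃ i : ℕ, i ≤ n ∧ z = a ^ (n - i) * b ^ i} := by
  induction n with
  | zero =>
    simp only [pow_zero, Ideal.one_eq_top]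
    symm
    rw [Ideal.eq_top_iff_one]
    exact Ideal.subset_span ⟨0, le_refl 0, by simp⟩
  | succ n ih =>
    rw [pow_succ', ih, Ideal.span_mul_span']
    congr 1
    ext z
    simp only [Set.mem_mul, Set.mem_insert_iff, Set.mem_singleton_iff, Set.mem_setOf_eq]
    constructor
    · rintro ⟨u, hu, v, ⟨i, hi, rfl⟩, rfl⟩
      rcases hu with rfl | rfl
      · refine ⟨i, by omega, ?_⟩
        have h : n + 1 - i = (n - i) + 1 := by omega
        rw [h, pow_succ]; ring
      · refine ⟨i + 1, by omega, ?_⟩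
        have h : n + 1 - (i + 1) = n - i := by omega
        rw [h, pow_succ]; ring
    · rintro ⟨i, hi, rfl⟩
      by_cases hin : i ≤ n
      · refine ⟨a, Or.inl rfl, a ^ (n - i) * b ^ i, ⟨i, hin, rfl⟩, ?_⟩
        have h : n + 1 - i = (n - i) + 1 := by omega
        rw [h, pow_succ]; ring
      · have hieq : i = n + 1 := by omega
        subst hieq
        refine ⟨b, Or.inr rfl, a ^ (n - n) * b ^ n, ⟨n, le_refl n, rfl⟩, ?_⟩
        have h1 : n + 1 - (n + 1) = 0 := by omega
        have h2 : n - n = 0 := by omega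
        rw [h1, h2, pow_succ]; ring

/-- In a domain, `(aJ : a) = J` for `a ≠ 0`. -/
lemma colon_span_singleton_mul {R : Type*} [CommRing R] [IsDomain R] {a : R}
    (ha : a ≠ 0) (J : Ideal R) :
    (Ideal.span {a} * J).colon (Ideal.span {a}) = J := by
  ext z
  rw [Ideal.mem_colon_span_singleton, Ideal.mem_span_singleton_mul]
  constructor
  · rintro ⟨w, hw, hwa⟩
    have : w = z := by
      apply mul_left_cancel₀ ha
      rw [hwa, mul_comm]
    exact this ▸ hw
  · intro hz
    exact ⟨z, hz, mul_comm a z⟩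

/-- The ideal `(x, y)` of the polynomial ring `k[x,y]`. -/
noncomputable def xyIdeal (k : Type*) [Field k] : Ideal (MvPolynomial (Fin 2) k) :=
  Ideal.span {X 0, X 1}

/-- Let `k` be a field, `R = k[x,y]` localized at `(x,y)`.  Then for all `m ≥ 0`,
`((x², xy)^{m+1} : (x)) = (x^{2m+1-i} y^i : 0 ≤ i ≤ m+1)`. -/
theorem colon_power_example (k : Type*) [Field k] [(xyIdeal k).IsPrime] :
    letI R := Localization.AtPrime (xyIdeal k)
    letI x : R := algebraMap (MvPolynomial (Fin 2) k) R (X 0)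
    letI y : R := algebraMap (MvPolynomial (Fin 2) k) R (X 1)
    ∀ m : ℕ, (Ideal.span {x ^ 2, x * y} ^ (m + 1)).colon (Ideal.span {x}) =
      Ideal.span {z : R | ∃ i : ℕ, i ≤ m + 1 ∧ z = x ^ (2 * m + 1 - i) * y ^ i} := by
  intro m
  set R := Localization.AtPrime (xyIdeal k)
  set x : R := algebraMap (MvPolynomial (Fin 2) k) R (X 0) with hxdef
  set y : R := algebraMap (MvPolynomial (Fin 2) k) R (X 1) with hydef
  have h0 : (xyIdeal k).primeCompl ≤ nonZeroDivisors (MvPolynomial (Fin 2) k) :=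
    le_nonZeroDivisors_of_noZeroDivisors
      (fun h => h (Ideal.zero_mem (xyIdeal k)))
  have hinj : Function.Injective (algebraMap (MvPolynomial (Fin 2) k) R) :=
    IsLocalization.injective (M := (xyIdeal k).primeCompl) R h0
  have hx : x ≠ 0 := by
    rw [hxdef]
    intro h
    apply MvPolynomial.X_ne_zero (R := k) (0 : Fin 2)
    apply hinj
    rw [map_zero]
    exact h
  -- (x², xy) = (x)(x, y)
  have h1 : Ideal.span {x ^ 2, x * y} = Ideal.span {x} * Ideal.span ({x, y} : Set R) := by
    rw [Ideal.span_mul_span', Set.singleton_mul, Set.image_pair, ← sq]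
  have h2 : Ideal.span {x ^ 2, x * y} ^ (m + 1) =
      Ideal.span {x} * (Ideal.span {x ^ m} * Ideal.span ({x, y} : Set R) ^ (m + 1)) := by
    rw [h1, mul_pow, Ideal.span_singleton_pow, pow_succ',
      ← Ideal.span_singleton_mul_span_singleton, mul_assoc]
  rw [h2, colon_span_singleton_mul hx, span_pair_pow_eq, Ideal.span_mul_span']
  congr 1
  ext z
  rw [Set.singleton_mul]
  constructor
  · rintro ⟨w, ⟨i, hi, rfl⟩, rfl⟩
    refine ⟨i, hi, ?_⟩
    simp only
    rw [← mul_assoc, ← pow_add]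
    congr 2
    omega
  · rintro ⟨i, hi, rfl⟩
    refine ⟨x ^ (m + 1 - i) * y ^ i, ⟨i, hi, rfl⟩, ?_⟩
    simp only
    rw [← mul_assoc, ← pow_add]
    congr 2
    omega
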